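/- The monomial diagonal invariants M(a,b), indexed by even bipartite partitions (a,b) of length n (all parts (a_i,b_i) with a_i+b_i even, including zero parts, sorted lexicographically), form a linear basis of the ring R^{B_n} of diagonally B_n-invariant polynomials in Q[x_1,...,x_n,y_1,...,y_n]. -/

import Mathlib

open scoped Classical

/-- The hyperoctahedral group `B_n`, modeled as pairs (permutation, sign vector),
i.e. the wreath product `ℤ₂ ≀ S_n`.  `β.2 i = true` means the entry at position `i`
is negative. -/
abbrev HO (n : ℕ) := Equiv.Perm (Fin n) × (Fin n → Bool)

namespace HO

/-- The inverse signed permutation. -/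
noncomputable def inv {n : ℕ} (β : HO n) : HO n := (β.1⁻¹, fun i => β.2 (β.1⁻¹ i))

/-- One-line notation (1-indexed): the signed value `β(i) ∈ {±1,…,±n}` for `1 ≤ i ≤ n`,
and `0` outside this range. -/
noncomputable def val {n : ℕ} (β : HO n) (i : ℕ) : ℤ :=
  if h : 1 ≤ i ∧ i ≤ n then
    (if β.2 ⟨i - 1, by omega⟩ then -(((β.1 ⟨i - 1, by omega⟩ : Fin n) : ℕ) + 1 : ℤ)
     else (((β.1 ⟨i - 1, by omega⟩ : Fin n) : ℕ) + 1 : ℤ))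
  else 0

/-- The order `-1 ≺ -2 ≺ ⋯ ≺ -n ≺ ⋯ ≺ 0 ≺ 1 ≺ 2 ≺ ⋯` on `ℤ`:
`bprec a b` means `a ≺ b`. -/
noncomputable def bprec (a b : ℤ) : Prop :=
  (a < 0 ∧ b < 0 ∧ -a < -b) ∨ (a < 0 ∧ 0 ≤ b) ∨ (0 ≤ a ∧ 0 ≤ b ∧ a < b)

/-- Descent set of `β` with respect to the order `≺`. -/
noncomputable def Des {n : ℕ} (β : HO n) : Finset ℕ :=
  (Finset.Icc 1 (n - 1)).filter fun i => bprec (val β (i + 1)) (val β i)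

/-- Rise set of `β` with respect to the order `≺`. -/
noncomputable def Ris {n : ℕ} (β : HO n) : Finset ℕ :=
  (Finset.Icc 1 (n - 1)).filter fun i => bprec (val β i) (val β (i + 1))

/-- Major index. -/
noncomputable def maj {n : ℕ} (β : HO n) : ℕ := ∑ i ∈ Des β, i

/-- Number of negative entries. -/
noncomputable def neg {n : ℕ} (β : HO n) : ℕ :=
  ((Finset.Icc 1 n).filter fun i => val β i < 0).card

/-- The flag-major index `fmaj β = 2 maj β + neg β`. -/
noncomputable def fmaj {n : ℕ} (β : HO n) : ℕ := 2 * maj β + neg β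

/-- `δ_i(β) = #{j ∈ Des(β) : j < i}`. -/
noncomputable def deltaStat {n : ℕ} (β : HO n) (i : ℕ) : ℕ := ((Des β).filter fun j => j < i).card

/-- `d_i(β) = #{j ∈ Des(β) : j ≥ i}`. -/
noncomputable def dStat {n : ℕ} (β : HO n) (i : ℕ) : ℕ := ((Des β).filter fun j => i ≤ j).card

/-- `ε_i(β) = 1` if `β(i) < 0`, else `0`. -/
noncomputable def epsStat {n : ℕ} (β : HO n) (i : ℕ) : ℕ := if val β i < 0 then 1 else 0

/-- `η_i(β) = 1` if `β(i) > 0`, else `0`. -/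
noncomputable def etaStat {n : ℕ} (β : HO n) (i : ℕ) : ℕ := if 0 < val β i then 1 else 0

/-- `g_i(β) = 2 δ_i(β) + η_i(β)`. -/
noncomputable def gstat {n : ℕ} (β : HO n) (i : ℕ) : ℕ := 2 * deltaStat β i + etaStat β i

/-- `f_i(β) = 2 d_i(β) + ε_i(β)` (so that `fmaj β = ∑ f_i(β)`). -/
noncomputable def fStat {n : ℕ} (β : HO n) (i : ℕ) : ℕ := 2 * dStat β i + epsStat β i

/-- `μ_i(β) = #{k ∈ Ris(β⁻¹) : k < i}`. -/
noncomputable def muStat {n : ℕ} (β : HO n) (i : ℕ) : ℕ := ((Ris (inv β)).filter fun k => k < i).card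

/-- `ĝ_i(β) = 2 μ_{σ(i)}(β) + ε_i(β)`, where `σ(i) = |β(i)|`. -/
noncomputable def ghat {n : ℕ} (β : HO n) (i : ℕ) : ℕ :=
  2 * muStat β (val β i).natAbs + epsStat β i

end HO

/-- The diagonal action of `β ∈ B_n` on `ℚ[x_1,…,x_n,y_1,…,y_n]`
(`x_i = X (inl i)`, `y_i = X (inr i)`): `β · p(x,y) = p(β·x, β·y)`. -/
noncomputable def actD {n : ℕ} (β : HO n) :
    MvPolynomial (Fin n ⊕ Fin n) ℚ →ₐ[ℚ] MvPolynomial (Fin n ⊕ Fin n) ℚ :=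
  MvPolynomial.aeval fun v =>
    match v with
    | Sum.inl i => (if β.2 i then -1 else 1) * MvPolynomial.X (Sum.inl (β.1 i))
    | Sum.inr i => (if β.2 i then -1 else 1) * MvPolynomial.X (Sum.inr (β.1 i))

/-- The determinant of `β ∈ B_n` viewed as a linear transformation on `ℚ^n`. -/
noncomputable def detHO {n : ℕ} (β : HO n) : ℚ :=
  ((Equiv.Perm.sign β.1 : ℤ) : ℚ) * (-1) ^ (Finset.univ.filter fun i => β.2 i).card

/-- The space `R^{B_n}` of diagonally `B_n`-invariant polynomials. -/
noncomputable def invD (n : ℕ) : Submodule ℚ (MvPolynomial (Fin n ⊕ Fin n) ℚ) where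
  carrier := {p | ∀ β : HO n, actD β p = p}
  add_mem' := by
    intro a b ha hb β
    simp only [map_add, ha β, hb β]
  zero_mem' := by intro β; simp
  smul_mem' := by
    intro c a ha β
    simp only [map_smul, ha β]

/-- The space `R^±` of diagonally `B_n`-alternating polynomials. -/
noncomputable def altD (n : ℕ) : Submodule ℚ (MvPolynomial (Fin n ⊕ Fin n) ℚ) where
  carrier := {p | ∀ β : HO n, actD β p = MvPolynomial.C (detHO β) * p}
  add_mem' := by
    intro a b ha hb β
    simp only [map_add, ha β, hb β, mul_add]
  zero_mem' := by intro β; simp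
  smul_mem' := by
    intro c a ha β
    simp only [map_smul, ha β, mul_smul_comm]

/-- The weight giving the bigrading of `ℚ[x,y]` by bidegree: `x`-variables have
weight `(1,0)` and `y`-variables weight `(0,1)`. -/
noncomputable def biWeight (n : ℕ) : Fin n ⊕ Fin n → ℕ × ℕ :=
  fun v => match v with
    | Sum.inl _ => (1, 0)
    | Sum.inr _ => (0, 1)

/-- Even bipartite partitions of length `n`: sequences of `n` cells `(a_i, b_i)` with
`a_i + b_i` even, listed in weakly increasing lexicographic order (empty parts
`(0,0)` allowed). -/
noncomputable def EvenBipartite (n : ℕ) : Type :=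
  {p : Fin n → ℕ × ℕ // (Monotone fun i => toLex (p i)) ∧
    ∀ i, ((p i).1 + (p i).2) % 2 = 0}

/-- The monomial diagonal invariant `M(a,b)`: the sum of the distinct monomials
`σ · (x^a y^b)` over permutations `σ ∈ S_n` of the variable pairs. -/
noncomputable def Mmon {n : ℕ} (p : Fin n → ℕ × ℕ) : MvPolynomial (Fin n ⊕ Fin n) ℚ :=
  ∑ m ∈ Finset.image
      (fun σ : Equiv.Perm (Fin n) =>
        Finsupp.equivFunOnFinite.symm fun v : Fin n ⊕ Fin n =>
          match v with
          | Sum.inl i => (p (σ⁻¹ i)).1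
          | Sum.inr i => (p (σ⁻¹ i)).2)
      Finset.univ,
    MvPolynomial.monomial m (1 : ℚ)

namespace AuxBasis

open MvPolynomial

variable {n : ℕ}

/-- The exponent-relabelling action of a permutation. -/
noncomputable def emap (σ : Equiv.Perm (Fin n)) (m : (Fin n ⊕ Fin n) →₀ ℕ) :
    (Fin n ⊕ Fin n) →₀ ℕ :=
  Finsupp.equivMapDomain (Equiv.sumCongr σ σ) m

lemma emap_apply_inl (σ : Equiv.Perm (Fin n)) (m : (Fin n ⊕ Fin n) →₀ ℕ) (j : Fin n) :
    emap σ m (Sum.inl j) = m (Sum.inl (σ⁻¹ j)) := rfl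

lemma emap_apply_inr (σ : Equiv.Perm (Fin n)) (m : (Fin n ⊕ Fin n) →₀ ℕ) (j : Fin n) :
    emap σ m (Sum.inr j) = m (Sum.inr (σ⁻¹ j)) := rfl

lemma emap_one (m : (Fin n ⊕ Fin n) →₀ ℕ) : emap (1 : Equiv.Perm (Fin n)) m = m := by
  ext v; cases v <;> rfl

lemma emap_mul (τ σ : Equiv.Perm (Fin n)) (m : (Fin n ⊕ Fin n) →₀ ℕ) :
    emap (τ * σ) m = emap τ (emap σ m) := by
  ext v
  cases v with
  | inl j =>
      rw [emap_apply_inl, emap_apply_inl, emap_apply_inl, mul_inv_rev, Equiv.Perm.mul_apply]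
  | inr j =>
      rw [emap_apply_inr, emap_apply_inr, emap_apply_inr, mul_inv_rev, Equiv.Perm.mul_apply]

lemma emap_injective (σ : Equiv.Perm (Fin n)) : Function.Injective (emap (n := n) σ) := by
  intro a b h
  have : emap σ⁻¹ (emap σ a) = emap σ⁻¹ (emap σ b) := by rw [h]
  rwa [← emap_mul, ← emap_mul, inv_mul_cancel, emap_one, emap_one] at this

/-- The sign picked up by a monomial under the action of `β`. -/
noncomputable def sgn (β : HO n) (m : (Fin n ⊕ Fin n) →₀ ℕ) : ℚ :=
  ∏ i : Fin n, (if β.2 i then (-1 : ℚ) else 1) ^ (m (Sum.inl i) + m (Sum.inr i))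

lemma sgn_even (β : HO n) (m : (Fin n ⊕ Fin n) →₀ ℕ)
    (h : ∀ i, (m (Sum.inl i) + m (Sum.inr i)) % 2 = 0) : sgn β m = 1 := by
  unfold sgn
  apply Finset.prod_eq_one
  intro i _
  by_cases hb : β.2 i
  · simp only [hb, if_true]
    exact Even.neg_one_pow (Nat.even_iff.2 (h i))
  · simp [hb]

lemma monomial_eq_prod (m : (Fin n ⊕ Fin n) →₀ ℕ) (c : ℚ) :
    (monomial m c : MvPolynomial (Fin n ⊕ Fin n) ℚ) = C c * ∏ v, X v ^ m v := by
  rw [monomial_eq]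
  congr 1
  exact Finsupp.prod_fintype _ _ (fun v => pow_zero _)

lemma actD_monomial (β : HO n) (m : (Fin n ⊕ Fin n) →₀ ℕ) (c : ℚ) :
    actD β (monomial m c) = C (sgn β m) * monomial (emap β.1 m) c := by
  have hX : ∀ v, actD β (X v) =
      (if β.2 (Sum.elim id id v) then (-1 : MvPolynomial (Fin n ⊕ Fin n) ℚ) else 1) *
        X (Equiv.sumCongr β.1 β.1 v) := by
    intro v
    cases v with
    | inl i =>
        show MvPolynomial.aeval _ (X (Sum.inl i)) = _
        rw [MvPolynomial.aeval_X]
        by_cases hb : β.2 i <;> simp [hb, Equiv.sumCongr_apply]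
    | inr i =>
        show MvPolynomial.aeval _ (X (Sum.inr i)) = _
        rw [MvPolynomial.aeval_X]
        by_cases hb : β.2 i <;> simp [hb, Equiv.sumCongr_apply]
  rw [monomial_eq_prod, monomial_eq_prod, map_mul, map_prod]
  have hC : actD β (C c) = C c := by
    show MvPolynomial.aeval _ (C c) = C c
    rw [MvPolynomial.aeval_C]
    rfl
  rw [hC]
  have key : (∏ v, actD β (X v ^ m v)) =
      C (sgn β m) * ∏ v, X v ^ (emap β.1 m v) := by
    have h1 : ∀ v, actD β (X v ^ m v) =
        ((if β.2 (Sum.elim id id v) then (-1 : MvPolynomial (Fin n ⊕ Fin n) ℚ) else 1) ^ m v) *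
          (X (Equiv.sumCongr β.1 β.1 v)) ^ m v := by
      intro v
      rw [map_pow, hX v, mul_pow]
    rw [Finset.prod_congr rfl (fun v _ => h1 v), Finset.prod_mul_distrib]
    congr 1
    · -- the sign part
      rw [Fintype.prod_sum_type]
      have : C (sgn β m) = ∏ i : Fin n,
          (if β.2 i then (-1 : MvPolynomial (Fin n ⊕ Fin n) ℚ) else 1) ^
            (m (Sum.inl i) + m (Sum.inr i)) := by
        unfold sgn
        rw [map_prod]
        apply Finset.prod_congr rfl
        intro i _
        rw [map_pow]
        by_cases hb : β.2 i <;> simp [hb]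
      rw [this]
      rw [← Finset.prod_mul_distrib]
      apply Finset.prod_congr rfl
      intro i _
      simp only [Sum.elim_inl, Sum.elim_inr, id]
      exact (pow_add _ _ _).symm
    · -- the relabelling part
      exact Fintype.prod_equiv (Equiv.sumCongr β.1 β.1)
        (fun v => X (Equiv.sumCongr β.1 β.1 v) ^ m v)
        (fun w => X w ^ (emap β.1 m w))
        (fun v => by
          have h : emap β.1 m (Equiv.sumCongr β.1 β.1 v) = m v := by
            unfold emap
            rw [Finsupp.equivMapDomain_apply, Equiv.symm_apply_apply]
          show X (Equiv.sumCongr β.1 β.1 v) ^ m v =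
            X (Equiv.sumCongr β.1 β.1 v) ^ emap β.1 m (Equiv.sumCongr β.1 β.1 v)
          rw [h])
  rw [key, mul_left_comm]

lemma coeff_actD (β : HO n) (f : MvPolynomial (Fin n ⊕ Fin n) ℚ) (m : (Fin n ⊕ Fin n) →₀ ℕ) :
    coeff (emap β.1 m) (actD β f) = sgn β m * coeff m f := by
  conv_lhs => rw [← f.support_sum_monomial_coeff]
  rw [map_sum, coeff_sum]
  have hterm : ∀ m' ∈ f.support,
      coeff (emap β.1 m) (actD β (monomial m' (coeff m' f))) =
        if m' = m then sgn β m * coeff m f else 0 := by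
    intro m' _
    rw [actD_monomial, coeff_C_mul, coeff_monomial]
    by_cases h : m' = m
    · subst h; simp
    · have : emap β.1 m' ≠ emap β.1 m := fun he => h (emap_injective β.1 he)
      simp [h, this]
  rw [Finset.sum_congr rfl hterm, Finset.sum_ite_eq' f.support m (fun _ => sgn β m * coeff m f)]
  by_cases hm : m ∈ f.support
  · simp [hm]
  · rw [MvPolynomial.notMem_support_iff] at hm
    simp [hm]

lemma coeff_perm_invariant {f : MvPolynomial (Fin n ⊕ Fin n) ℚ} (hf : f ∈ invD n)
    (σ : Equiv.Perm (Fin n)) (m : (Fin n ⊕ Fin n) →₀ ℕ) :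
    coeff (emap σ m) f = coeff m f := by
  have h := coeff_actD (⟨σ, fun _ => false⟩ : HO n) f m
  have hs : sgn (⟨σ, fun _ => false⟩ : HO n) m = 1 := by
    unfold sgn; simp
  rw [hf ⟨σ, fun _ => false⟩, hs, one_mul] at h
  exact h

lemma coeff_odd_vanish {f : MvPolynomial (Fin n ⊕ Fin n) ℚ} (hf : f ∈ invD n)
    (m : (Fin n ⊕ Fin n) →₀ ℕ) (i : Fin n)
    (hodd : (m (Sum.inl i) + m (Sum.inr i)) % 2 = 1) : coeff m f = 0 := by
  set β : HO n := ⟨1, fun j => decide (j = i)⟩ with hβ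
  have h := coeff_actD β f m
  have hs : sgn β m = -1 := by
    unfold sgn
    have : ∀ j : Fin n, (if β.2 j then (-1 : ℚ) else 1) ^ (m (Sum.inl j) + m (Sum.inr j)) =
        if j = i then (-1 : ℚ) ^ (m (Sum.inl j) + m (Sum.inr j)) else 1 := by
      intro j
      by_cases hji : j = i
      · simp [hβ, hji]
      · simp [hβ, hji]
    rw [Finset.prod_congr rfl (fun j _ => this j),
      Finset.prod_ite_eq' Finset.univ i (fun j => (-1 : ℚ) ^ (m (Sum.inl j) + m (Sum.inr j)))]
    simp only [Finset.mem_univ, if_true]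
    exact Odd.neg_one_pow (Nat.odd_iff.2 hodd)
  have hβ1 : β.1 = 1 := rfl
  rw [hf β, hs, hβ1, emap_one] at h
  linarith

/-- The monomial exponent obtained by permuting a bipartite sequence. -/
noncomputable def msig (p : Fin n → ℕ × ℕ) (σ : Equiv.Perm (Fin n)) : (Fin n ⊕ Fin n) →₀ ℕ :=
  Finsupp.equivFunOnFinite.symm fun v : Fin n ⊕ Fin n =>
    match v with
    | Sum.inl i => (p (σ⁻¹ i)).1
    | Sum.inr i => (p (σ⁻¹ i)).2

lemma msig_apply_inl (p : Fin n → ℕ × ℕ) (σ : Equiv.Perm (Fin n)) (i : Fin n) :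
    msig p σ (Sum.inl i) = (p (σ⁻¹ i)).1 := rfl

lemma msig_apply_inr (p : Fin n → ℕ × ℕ) (σ : Equiv.Perm (Fin n)) (i : Fin n) :
    msig p σ (Sum.inr i) = (p (σ⁻¹ i)).2 := rfl

lemma Mmon_eq (p : Fin n → ℕ × ℕ) :
    Mmon p = ∑ m ∈ Finset.image (msig p) Finset.univ, monomial m (1 : ℚ) := rfl

lemma emap_msig (τ σ : Equiv.Perm (Fin n)) (p : Fin n → ℕ × ℕ) :
    emap τ (msig p σ) = msig p (τ * σ) := by
  ext v
  cases v with
  | inl j =>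
      rw [emap_apply_inl, msig_apply_inl, msig_apply_inl, mul_inv_rev, Equiv.Perm.mul_apply]
  | inr j =>
      rw [emap_apply_inr, msig_apply_inr, msig_apply_inr, mul_inv_rev, Equiv.Perm.mul_apply]

lemma msig_even (p : Fin n → ℕ × ℕ) (hp : ∀ i, ((p i).1 + (p i).2) % 2 = 0)
    (σ : Equiv.Perm (Fin n)) (i : Fin n) :
    (msig p σ (Sum.inl i) + msig p σ (Sum.inr i)) % 2 = 0 := by
  rw [msig_apply_inl, msig_apply_inr]; exact hp _

lemma coeff_Mmon (p : Fin n → ℕ × ℕ) (m : (Fin n ⊕ Fin n) →₀ ℕ) :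
    coeff m (Mmon p) = if m ∈ Finset.image (msig p) Finset.univ then (1 : ℚ) else 0 := by
  rw [Mmon_eq, coeff_sum]
  have : ∀ m' ∈ Finset.image (msig p) Finset.univ,
      coeff m (monomial m' (1 : ℚ)) = if m' = m then (1 : ℚ) else 0 := by
    intro m' _; rw [coeff_monomial]
  rw [Finset.sum_congr rfl this, Finset.sum_ite_eq' _ m (fun _ => (1 : ℚ))]

lemma Mmon_mem_invD (p : Fin n → ℕ × ℕ) (hp : ∀ i, ((p i).1 + (p i).2) % 2 = 0) :
    Mmon p ∈ invD n := by
  intro β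
  rw [Mmon_eq, map_sum]
  have hterm : ∀ m ∈ Finset.image (msig p) Finset.univ,
      actD β (monomial m (1 : ℚ)) = monomial (emap β.1 m) 1 := by
    intro m hm
    obtain ⟨σ, _, rfl⟩ := Finset.mem_image.mp hm
    rw [actD_monomial, sgn_even _ _ (msig_even p hp σ), map_one, one_mul]
  rw [Finset.sum_congr rfl hterm]
  have hinj : ∀ x ∈ Finset.image (msig p) Finset.univ,
      ∀ y ∈ Finset.image (msig p) Finset.univ, emap β.1 x = emap β.1 y → x = y :=
    fun x _ y _ h => emap_injective β.1 h
  rw [← Finset.sum_image (f := fun m' => (monomial m' (1 : ℚ))) hinj]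
  have himg : Finset.image (emap β.1) (Finset.image (msig p) Finset.univ) =
      Finset.image (msig p) Finset.univ := by
    rw [Finset.image_image]
    have h1 : (emap β.1 ∘ msig p) = fun σ => msig p (β.1 * σ) := by
      funext σ; exact emap_msig β.1 σ p
    rw [h1]
    apply Finset.ext
    intro m
    simp only [Finset.mem_image, Finset.mem_univ, true_and]
    constructor
    · rintro ⟨σ, rfl⟩; exact ⟨β.1 * σ, rfl⟩
    · rintro ⟨σ, rfl⟩; exact ⟨β.1⁻¹ * σ, by rw [← mul_assoc, mul_inv_cancel, one_mul]⟩
  rw [himg]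

/-- The pair sequence of a monomial. -/
noncomputable def pf (m : (Fin n ⊕ Fin n) →₀ ℕ) : Fin n → ℕ × ℕ :=
  fun i => (m (Sum.inl i), m (Sum.inr i))

noncomputable def sortPerm (m : (Fin n ⊕ Fin n) →₀ ℕ) : Equiv.Perm (Fin n) :=
  Tuple.sort (fun i => toLex (pf m i))

noncomputable def sortedOf (m : (Fin n ⊕ Fin n) →₀ ℕ) : Fin n → ℕ × ℕ :=
  fun i => pf m (sortPerm m i)

lemma sortedOf_monotone (m : (Fin n ⊕ Fin n) →₀ ℕ) :
    Monotone fun i => toLex (sortedOf m i) :=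
  Tuple.monotone_sort (fun i => toLex (pf m i))

lemma msig_sortedOf (m : (Fin n ⊕ Fin n) →₀ ℕ) : msig (sortedOf m) (sortPerm m) = m := by
  ext v
  cases v with
  | inl j =>
      rw [msig_apply_inl]
      show (pf m (sortPerm m ((sortPerm m)⁻¹ j))).1 = m (Sum.inl j)
      rw [show sortPerm m ((sortPerm m)⁻¹ j) = j from (sortPerm m).apply_symm_apply j]
      rfl
  | inr j =>
      rw [msig_apply_inr]
      show (pf m (sortPerm m ((sortPerm m)⁻¹ j))).2 = m (Sum.inr j)
      rw [show sortPerm m ((sortPerm m)⁻¹ j) = j from (sortPerm m).apply_symm_apply j]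
      rfl

lemma sorted_unique {p q : Fin n → ℕ × ℕ}
    (hp : Monotone fun i => toLex (p i)) (hq : Monotone fun i => toLex (q i))
    {σ τ : Equiv.Perm (Fin n)} (h : msig p σ = msig q τ) : p = q := by
  have hpq : ∀ j, q j = p ((σ⁻¹ * τ) j) := by
    intro j
    have h1 : msig p σ (Sum.inl (τ j)) = msig q τ (Sum.inl (τ j)) := by rw [h]
    have h2 : msig p σ (Sum.inr (τ j)) = msig q τ (Sum.inr (τ j)) := by rw [h]
    rw [msig_apply_inl, msig_apply_inl, show τ⁻¹ (τ j) = j from τ.symm_apply_apply j] at h1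
    rw [msig_apply_inr, msig_apply_inr, show τ⁻¹ (τ j) = j from τ.symm_apply_apply j] at h2
    have : p (σ⁻¹ (τ j)) = q j := Prod.ext h1 h2
    rw [← this]; rfl
  have hcomp : (fun i => toLex (p i)) ∘ (σ⁻¹ * τ) = fun i => toLex (q i) := by
    funext j
    show toLex (p ((σ⁻¹ * τ) j)) = toLex (q j)
    rw [hpq j]
  have hmq : Monotone ((fun i => toLex (p i)) ∘ (σ⁻¹ * τ)) := hcomp ▸ hq
  have hmp : Monotone ((fun i => toLex (p i)) ∘ (1 : Equiv.Perm (Fin n))) := by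
    simpa using hp
  have := Tuple.unique_monotone hmq hmp
  funext j
  have hj : toLex (p ((σ⁻¹ * τ) j)) = toLex (p j) := congrFun this j
  have := hpq j
  rw [this]
  exact toLex.injective hj.symm

lemma mem_image_msig_iff {p q : Fin n → ℕ × ℕ}
    (hp : Monotone fun i => toLex (p i)) (hq : Monotone fun i => toLex (q i)) :
    msig p 1 ∈ Finset.image (msig q) Finset.univ ↔ p = q := by
  constructor
  · intro h
    obtain ⟨τ, _, hτ⟩ := Finset.mem_image.mp h
    exact (sorted_unique hq hp hτ).symm
  · rintro rfl
    exact Finset.mem_image.mpr ⟨1, Finset.mem_univ _, rfl⟩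

lemma span_mem (N : ℕ) : ∀ f : MvPolynomial (Fin n ⊕ Fin n) ℚ, f ∈ invD n →
    f.support.card ≤ N →
    f ∈ Submodule.span ℚ (Set.range fun p : EvenBipartite n => Mmon p.1) := by
  induction N with
  | zero =>
      intro f _ hcard
      have h1 : f.support = ∅ := Finset.card_eq_zero.mp (Nat.le_zero.mp hcard)
      rw [MvPolynomial.support_eq_empty.mp h1]
      exact Submodule.zero_mem _
  | succ N ih =>
      intro f hf hcard
      by_cases h0 : f = 0
      · rw [h0]; exact Submodule.zero_mem _
      obtain ⟨m, hm⟩ := MvPolynomial.support_nonempty.mpr h0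
      set q : Fin n → ℕ × ℕ := sortedOf m with hqdef
      have hq1 : Monotone fun i => toLex (q i) := sortedOf_monotone m
      have hq2 : ∀ i, ((q i).1 + (q i).2) % 2 = 0 := by
        intro i
        by_contra hodd
        have hodd' : (m (Sum.inl (sortPerm m i)) + m (Sum.inr (sortPerm m i))) % 2 = 1 := by
          have : ((q i).1 + (q i).2) % 2 = 1 := by omega
          exact this
        have := coeff_odd_vanish hf m (sortPerm m i) hodd'
        exact (MvPolynomial.mem_support_iff.mp hm) this
      set c : ℚ := coeff m f with hcdef
      set f' : MvPolynomial (Fin n ⊕ Fin n) ℚ := f - c • Mmon q with hf'def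
      have hMq : Mmon q ∈ invD n := Mmon_mem_invD q hq2
      have hf'inv : f' ∈ invD n :=
        Submodule.sub_mem _ hf (Submodule.smul_mem _ _ hMq)
      have hconst : ∀ m' ∈ Finset.image (msig q) Finset.univ, coeff m' f = c := by
        intro m' hm'
        obtain ⟨σ, _, rfl⟩ := Finset.mem_image.mp hm'
        have h0 : msig q (sortPerm m) = m := msig_sortedOf m
        have h1 : emap (σ * (sortPerm m)⁻¹) m = msig q σ := by
          have h2 := emap_msig (σ * (sortPerm m)⁻¹) (sortPerm m) q
          rw [h0] at h2
          rw [h2, inv_mul_cancel_right]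
        rw [← h1, coeff_perm_invariant hf]
      have hm_mem : m ∈ Finset.image (msig q) Finset.univ :=
        Finset.mem_image.mpr ⟨sortPerm m, Finset.mem_univ _, msig_sortedOf m⟩
      have hcoeff' : ∀ m', coeff m' f' =
          coeff m' f - c * (if m' ∈ Finset.image (msig q) Finset.univ then 1 else 0) := by
        intro m'
        rw [hf'def, coeff_sub, MvPolynomial.coeff_smul, coeff_Mmon, smul_eq_mul]
      have hsupp : f'.support ⊆ f.support.erase m := by
        intro m' hm'
        rw [MvPolynomial.mem_support_iff] at hm'
        rw [Finset.mem_erase, MvPolynomial.mem_support_iff]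
        constructor
        · intro heq
          apply hm'
          rw [heq, hcoeff' m, if_pos hm_mem, mul_one, ← hcdef, sub_self]
        · intro hz
          apply hm'
          rw [hcoeff' m', hz]
          by_cases hmem : m' ∈ Finset.image (msig q) Finset.univ
          · rw [if_pos hmem, mul_one, ← hconst m' hmem, hz, sub_self]
          · rw [if_neg hmem, mul_zero, sub_zero]
      have hcard' : f'.support.card ≤ N := by
        have h1 : (f.support.erase m).card < f.support.card := Finset.card_erase_lt_of_mem hm
        have h2 : f'.support.card ≤ (f.support.erase m).card := Finset.card_le_card hsupp
        omega
      have hf'span := ih f' hf'inv hcard'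
      have hMspan : Mmon q ∈ Submodule.span ℚ
          (Set.range fun p : EvenBipartite n => Mmon p.1) := by
        apply Submodule.subset_span
        exact ⟨(⟨q, hq1, hq2⟩ : EvenBipartite n), rfl⟩
      have : f = f' + c • Mmon q := by rw [hf'def]; ring
      rw [this]
      exact Submodule.add_mem _ hf'span (Submodule.smul_mem _ _ hMspan)

end AuxBasis

/-- the monomial diagonal invariants `M(a,b)`, indexed by even bipartite
partitions of length `n`, form a linear basis of the space of diagonally
`B_n`-invariant polynomials. -/
theorem monomial_invariants_basis (n : ℕ) :
    LinearIndependent ℚ (fun p : EvenBipartite n => Mmon p.1) ∧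
    Submodule.span ℚ (Set.range fun p : EvenBipartite n => Mmon p.1) = invD n := by
  open AuxBasis MvPolynomial in
  constructor
  · rw [linearIndependent_iff']
    intro s g hsum p hp
    have hcoeff := congrArg (coeff (msig p.1 1)) hsum
    rw [coeff_sum, coeff_zero] at hcoeff
    have hterm : ∀ r ∈ s, coeff (msig p.1 1) (g r • Mmon r.1) =
        if r = p then g r else 0 := by
      intro r _
      rw [MvPolynomial.coeff_smul, coeff_Mmon]
      by_cases hrp : r = p
      · subst hrp
        rw [if_pos ((mem_image_msig_iff r.2.1 r.2.1).mpr rfl), if_pos rfl]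
        simp
      · have : p.1 ≠ r.1 := by
          intro h
          exact hrp (Subtype.ext h.symm)
        rw [if_neg (fun hmem => this ((mem_image_msig_iff p.2.1 r.2.1).mp hmem)), if_neg hrp]
        simp
    rw [Finset.sum_congr rfl hterm, Finset.sum_ite_eq' s p (fun r => g r), if_pos hp] at hcoeff
    exact hcoeff
  · apply le_antisymm
    · rw [Submodule.span_le]
      rintro _ ⟨p, rfl⟩
      exact Mmon_mem_invD p.1 p.2.2
    · intro f hf
      exact span_mem f.support.card f hf le_rfl
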